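/- Let v, w ∈ ℝ³ satisfy |v| ≤ 2√2, |w| ≥ 2, and |w − v| ≥ 2. Then every point p on the segment from the origin 0 to v satisfies min(|p|, |p − v|) ≤ |p − w|. (In particular, no point between two packing centers at distance less than 2√2 can lie strictly in the Voronoi cell of a third center.) -/

import Mathlib

open MeasureTheory Real

noncomputable section

abbrev E3 : Type := EuclideanSpace ℝ (Fin 3)

/-- The density of the regular octahedron. -/
def δoct : ℝ := (-3 * π + 12 * arccos (1 / Real.sqrt 3)) / Real.sqrt 8

/-- No point on the segment between two centers at distance at most `2√2` lies in the
Voronoi cell of a third center: if `|v| ≤ 2√2`, `|w| ≥ 2` and `|w - v| ≥ 2`, then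
every `p ∈ [0, v]` satisfies `min (|p|, |p - v|) ≤ |p - w|`. -/
theorem segment_point_not_in_third_voronoi_cell (v w : E3)
    (hv : ‖v‖ ≤ 2 * Real.sqrt 2) (hw : 2 ≤ ‖w‖) (hwv : 2 ≤ ‖w - v‖)
    (p : E3) (hp : p ∈ segment ℝ (0 : E3) v) :
    min ‖p‖ ‖p - v‖ ≤ ‖p - w‖ := by
  obtain ⟨a, b, ha, hb, hab, hpab⟩ := hp
  have hpv : p = b • v := by rw [← hpab]; simp
  subst hpv
  have hb1 : b ≤ 1 := by linarith
  have hx : ‖v‖ ^ 2 ≤ 8 := by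
    nlinarith [Real.sq_sqrt (show (0:ℝ) ≤ 2 by norm_num), Real.sqrt_nonneg 2,
      norm_nonneg v]
  have hz : 4 ≤ ‖w‖ ^ 2 := by nlinarith [norm_nonneg w]
  have hzv : 4 ≤ ‖w - v‖ ^ 2 := by nlinarith [norm_nonneg (w - v)]
  have hexp : ‖w - v‖ ^ 2 = ‖w‖ ^ 2 - 2 * inner ℝ w v + ‖v‖ ^ 2 := by
    rw [norm_sub_sq_real]
  have hC : 4 ≤ ‖w‖ ^ 2 - 2 * (inner ℝ w v : ℝ) + ‖v‖ ^ 2 := by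
    rw [← hexp]; exact hzv
  have hnbv : ‖b • v‖ = b * ‖v‖ := by
    rw [norm_smul, Real.norm_eq_abs, abs_of_nonneg hb]
  have hnbv' : ‖b • v - v‖ = (1 - b) * ‖v‖ := by
    have : b • v - v = (b - 1) • v := by
      rw [sub_smul, one_smul]
    rw [this, norm_smul, Real.norm_eq_abs, abs_of_nonpos (by linarith)]
    ring
  have hexp2 : ‖b • v - w‖ ^ 2
      = b ^ 2 * ‖v‖ ^ 2 - 2 * (b * inner ℝ w v) + ‖w‖ ^ 2 := by
    rw [norm_sub_sq_real, norm_smul, Real.norm_eq_abs, abs_of_nonneg hb,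
      real_inner_smul_left, real_inner_comm]
    ring
  have key : (min ‖b • v‖ ‖b • v - v‖) ^ 2 ≤ ‖b • v - w‖ ^ 2 := by
    rcases le_total ‖b • v‖ ‖b • v - v‖ with h | h
    · rw [min_eq_left h, hexp2, hnbv]
      rw [hnbv, hnbv'] at h
      nlinarith [mul_nonneg hb (by linarith : (0:ℝ) ≤ ‖w‖ ^ 2 - 2 * inner ℝ w v + ‖v‖ ^ 2 - 4),
        mul_nonneg (by linarith : (0:ℝ) ≤ 1 - b) (by linarith : (0:ℝ) ≤ ‖w‖ ^ 2 - 4),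
        mul_le_mul_of_nonneg_right h (norm_nonneg v)]
    · rw [min_eq_right h, hexp2, hnbv']
      rw [hnbv, hnbv'] at h
      nlinarith [mul_nonneg hb (by linarith : (0:ℝ) ≤ ‖w‖ ^ 2 - 2 * inner ℝ w v + ‖v‖ ^ 2 - 4),
        mul_nonneg (by linarith : (0:ℝ) ≤ 1 - b) (by linarith : (0:ℝ) ≤ ‖w‖ ^ 2 - 4),
        mul_le_mul_of_nonneg_right h (norm_nonneg v)]
  have h1 : 0 ≤ min ‖b • v‖ ‖b • v - v‖ := le_min (norm_nonneg _) (norm_nonneg _)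
  nlinarith [key, h1, norm_nonneg (b • v - w)]
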